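/- Let p(z,w) be a nonzero polynomial of degree m in z and degree n in w. Then the set of branched values C(p) = {w ∈ Ĉ : ∃z, p(z,w)=0 and e_p(z,w) ≥ 2} is finite, with cardinality at most 2(m−1)n, and hence the set of branched points B(p) = {z ∈ Ĉ : ∃w, p(z,w)=0 and e_p(z,w) ≥ 2} is finite with cardinality at most 2m(m−1)n. -/

import Mathlib

open Polynomial

/-- Specialization of `p(z,w)` at `w = w₀`, as a polynomial in `z`. -/
noncomputable def spec (p : Polynomial (Polynomial ℂ)) (w : ℂ) : Polynomial ℂ :=
  p.map (Polynomial.evalRingHom w)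

lemma spec_def (p : Polynomial (Polynomial ℂ)) (w : ℂ) :
    spec p w = p.map (Polynomial.evalRingHom w) := rfl

lemma coeff_sum_range {A : Type*} [Semiring A] (N : ℕ) (a : ℕ → A) {t : ℕ} (ht : t < N) :
    (∑ i ∈ Finset.range N, C (a i) * X ^ i).coeff t = a t := by
  rw [finset_sum_coeff]
  simp only [coeff_C_mul, coeff_X_pow]
  rw [Finset.sum_eq_single t]
  · simp
  · intro b _ hb
    have hb' : t ≠ b := fun h => hb h.symm
    simp [hb']
  · intro h
    exact absurd (Finset.mem_range.mpr ht) h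

lemma coeff_coeff_le {p : Polynomial (Polynomial ℂ)} {n : ℕ}
    (hn : ∀ z : ℂ, (p.eval (Polynomial.C z)).natDegree ≤ n) (i : ℕ) :
    (p.coeff i).natDegree ≤ n := by
  rw [natDegree_le_iff_coeff_eq_zero]
  intro j hj
  set F : Polynomial ℂ := ∑ i ∈ Finset.range (p.natDegree + 1), C ((p.coeff i).coeff j) * X ^ i
    with hF
  have hFz : ∀ z : ℂ, F.eval z = 0 := by
    intro z
    have h1 : (p.eval (Polynomial.C z)).coeff j = 0 :=
      coeff_eq_zero_of_natDegree_lt (lt_of_le_of_lt (hn z) hj)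
    have h2 : p.eval (Polynomial.C z)
        = ∑ i ∈ Finset.range (p.natDegree + 1), p.coeff i * (Polynomial.C z) ^ i :=
      eval_eq_sum_range _
    rw [h2, finset_sum_coeff] at h1
    rw [hF, eval_finset_sum]
    simp only [eval_mul, eval_C, eval_pow, eval_X]
    rw [← h1]
    refine Finset.sum_congr rfl (fun i _ => ?_)
    rw [← C_pow, coeff_mul_C]
  have hF0 : F = 0 := Polynomial.funext (fun z => by rw [hFz z, eval_zero])
  rcases le_or_gt i p.natDegree with hi | hi
  · have := coeff_sum_range (p.natDegree + 1) (fun i => (p.coeff i).coeff j)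
      (t := i) (by omega)
    rw [← hF, hF0, coeff_zero] at this
    exact this.symm
  · rw [coeff_eq_zero_of_natDegree_lt hi, coeff_zero]

/-- column index for the Sylvester-type matrix -/
def ci (k : ℕ) : Fin k ⊕ Fin k → ℕ := Sum.elim (fun i => (i : ℕ)) (fun i => k + i)

/-- Sylvester-type matrix of two polynomials, both with formal degree `k`. -/
noncomputable def syl {A : Type*} [CommRing A] (k : ℕ) (f g : Polynomial A) :
    Matrix (Fin k ⊕ Fin k) (Fin k ⊕ Fin k) A := fun r c =>
  (Sum.elim (fun i : Fin k => f * X ^ (i : ℕ)) (fun i : Fin k => g * X ^ (i : ℕ)) r).coeff (ci k c)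

lemma sum_ci {M : Type*} [AddCommMonoid M] (k : ℕ) (F : ℕ → M) :
    ∑ c : Fin k ⊕ Fin k, F (ci k c) = ∑ j ∈ Finset.range (k + k), F j := by
  rw [Fintype.sum_sum_type]
  simp only [ci, Sum.elim_inl, Sum.elim_inr]
  rw [Fin.sum_univ_eq_sum_range (fun j => F j), Fin.sum_univ_eq_sum_range (fun j => F (k + j)),
    ← Finset.sum_range_add]

lemma syl_map {A B : Type*} [CommRing A] [CommRing B] (φ : A →+* B) (k : ℕ)
    (f g : Polynomial A) : (syl k f g).map φ = syl k (f.map φ) (g.map φ) := by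
  ext r c
  cases r with
  | inl i => simp [syl, Matrix.map, ← coeff_map, Polynomial.map_mul, Polynomial.map_pow]
  | inr i => simp [syl, Matrix.map, ← coeff_map, Polynomial.map_mul, Polynomial.map_pow]

lemma fact1 {k : ℕ} (hk : 0 < k) (f g : Polynomial ℂ) (hf : f.natDegree ≤ k)
    (hg : g.natDegree ≤ k) (z : ℂ) (hfz : f.eval z = 0) (hgz : g.eval z = 0) :
    (syl k f g).det = 0 := by
  rw [← Matrix.exists_mulVec_eq_zero_iff]
  refine ⟨fun c => z ^ ci k c, ?_, ?_⟩
  · intro h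
    have := congrFun h (Sum.inl ⟨0, hk⟩)
    simp [ci] at this
  · funext r
    have key : ∀ q : Polynomial ℂ, q.natDegree < k + k → q.eval z = 0 →
        ∑ c : Fin k ⊕ Fin k, q.coeff (ci k c) * z ^ ci k c = 0 := by
      intro q hq hqz
      rw [sum_ci k (fun j => q.coeff j * z ^ j), ← eval_eq_sum_range' hq, hqz]
    have hik : ∀ i : Fin k, (i : ℕ) < k := fun i => i.2
    cases r with
    | inl i =>
        simpa [Matrix.mulVec, dotProduct, syl] using
          key (f * X ^ (i : ℕ))
            (by
              have h1 : (f * X ^ (i : ℕ)).natDegree ≤ f.natDegree + (i:ℕ) :=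
                natDegree_mul_le.trans (by simp)
              have := hik i; omega)
            (by simp [hfz])
    | inr i =>
        simpa [Matrix.mulVec, dotProduct, syl] using
          key (g * X ^ (i : ℕ))
            (by
              have h1 : (g * X ^ (i : ℕ)).natDegree ≤ g.natDegree + (i:ℕ) :=
                natDegree_mul_le.trans (by simp)
              have := hik i; omega)
            (by simp [hgz])

lemma coeff_finsum {F : Type*} [Semiring F] {k : ℕ} (a : Fin k → F) (t : Fin k) :
    (∑ i : Fin k, C (a i) * X ^ (i : ℕ)).coeff (t : ℕ) = a t := by
  rw [finset_sum_coeff]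
  simp only [coeff_C_mul, coeff_X_pow]
  rw [Finset.sum_eq_single t]
  · simp
  · intro b _ hb
    have : (t : ℕ) ≠ (b : ℕ) := fun h => hb (Fin.ext h.symm)
    simp [this]
  · simp

lemma fact2 {F : Type*} [Field F] {k : ℕ} (hk : 0 < k) (f g : Polynomial F)
    (hfd : f.natDegree = k) (hgd : g.natDegree ≤ k) (hco : IsCoprime f g) :
    (syl k f g).det ≠ 0 := by
  intro hdet
  have hf0 : f ≠ 0 := by intro h; rw [h, natDegree_zero] at hfd; omega
  obtain ⟨v, hv, hvM⟩ := Matrix.exists_vecMul_eq_zero_iff.mpr hdet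
  set A : Polynomial F := ∑ i : Fin k, C (v (Sum.inl i)) * X ^ (i : ℕ) with hA
  set B : Polynomial F := ∑ i : Fin k, C (v (Sum.inr i)) * X ^ (i : ℕ) with hB
  have hdle : ∀ i : Fin k, ∀ a : F, (C a * X ^ (i : ℕ)).natDegree ≤ k - 1 := by
    intro i a
    exact (natDegree_C_mul_X_pow_le a (i : ℕ)).trans (by have := i.2; omega)
  have hAdeg : A.natDegree ≤ k - 1 :=
    natDegree_sum_le_of_forall_le _ _ (fun i _ => hdle i _)
  have hBdeg : B.natDegree ≤ k - 1 :=
    natDegree_sum_le_of_forall_le _ _ (fun i _ => hdle i _)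
  have hsum : A * f + B * g = ∑ r : Fin k ⊕ Fin k, v r •
      (Sum.elim (fun i : Fin k => f * X ^ (i : ℕ)) (fun i : Fin k => g * X ^ (i : ℕ)) r) := by
    rw [Fintype.sum_sum_type]
    simp only [Sum.elim_inl, Sum.elim_inr]
    rw [hA, hB, Finset.sum_mul, Finset.sum_mul]
    congr 1 <;> exact Finset.sum_congr rfl (fun i _ => by rw [smul_eq_C_mul]; ring)
  have hcoeff : ∀ c : Fin k ⊕ Fin k, (A * f + B * g).coeff (ci k c) = 0 := by
    intro c
    have hthis := congrFun hvM c
    rw [hsum, finset_sum_coeff]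
    simp only [coeff_smul, smul_eq_mul]
    simpa [Matrix.vecMul, dotProduct, syl] using hthis
  have hdegW : (A * f + B * g).natDegree < k + k := by
    have h1 : (A * f).natDegree ≤ (k - 1) + k := natDegree_mul_le.trans (add_le_add hAdeg hfd.le)
    have h2 : (B * g).natDegree ≤ (k - 1) + k := natDegree_mul_le.trans (add_le_add hBdeg hgd)
    have h3 := natDegree_add_le (A * f) (B * g)
    omega
  have key : A * f + B * g = 0 := by
    ext j
    rw [coeff_zero]
    rcases lt_or_ge j (k + k) with hj | hj
    · rcases lt_or_ge j k with h | h
      · exact hcoeff (Sum.inl ⟨j, h⟩)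
      · have := hcoeff (Sum.inr ⟨j - k, by omega⟩)
        simpa [ci, Nat.add_sub_cancel' h] using this
    · exact coeff_eq_zero_of_natDegree_lt (lt_of_lt_of_le hdegW hj)
  have hg0 : g ≠ 0 := by
    intro h; rw [h] at hco
    have hfu := isCoprime_zero_right.mp hco
    have := natDegree_eq_zero_of_isUnit hfu
    omega
  have hfdvd : f ∣ B * g := ⟨-A, by linear_combination key⟩
  have hB0 : B = 0 := by
    by_contra hBne
    have h1 := natDegree_le_of_dvd (hco.dvd_of_dvd_mul_right hfdvd) hBne
    omega
  have hA0 : A = 0 := by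
    have hAf : A * f = 0 := by rw [hB0] at key; simpa using key
    rcases mul_eq_zero.mp hAf with h | h
    · exact h
    · exact absurd h hf0
  apply hv
  funext r
  cases r with
  | inl i =>
      have h := coeff_finsum (fun i => v (Sum.inl i)) i
      rw [← hA, hA0] at h
      simpa using h.symm
  | inr i =>
      have h := coeff_finsum (fun i => v (Sum.inr i)) i
      rw [← hB, hB0] at h
      simpa using h.symm

lemma syl_det_natDegree_le (k n : ℕ) (f g : Polynomial (Polynomial ℂ))
    (hf : ∀ i, (f.coeff i).natDegree ≤ n) (hg : ∀ i, (g.coeff i).natDegree ≤ n) :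
    (syl k f g).det.natDegree ≤ (k + k) * n := by
  have hentry : ∀ r c, ((syl k f g) r c).natDegree ≤ n := by
    intro r c
    cases r with
    | inl i =>
        show ((f * X ^ (i : ℕ)).coeff (ci k c)).natDegree ≤ n
        rw [coeff_mul_X_pow']
        split
        · exact hf _
        · simp
    | inr i =>
        show ((g * X ^ (i : ℕ)).coeff (ci k c)).natDegree ≤ n
        rw [coeff_mul_X_pow']
        split
        · exact hg _
        · simp
  rw [Matrix.det_apply']
  refine natDegree_sum_le_of_forall_le _ _ (fun σ _ => ?_)
  refine natDegree_mul_le.trans ?_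
  have h1 : (((Equiv.Perm.sign σ : ℤ) : Polynomial ℂ[X])).natDegree = 0 := natDegree_intCast _
  have h2 : (∏ i, (syl k f g) (σ i) i).natDegree ≤ (k + k) * n := by
    refine (natDegree_prod_le _ _).trans ?_
    calc ∑ i, ((syl k f g) (σ i) i).natDegree ≤ ∑ _i : Fin k ⊕ Fin k, n :=
          Finset.sum_le_sum (fun i _ => hentry _ _)
      _ = (k + k) * n := by simp [Fintype.card_sum, mul_comm]
  simp only [natDegree_intCast, zero_add]
  exact h2

local notation "R" => Polynomial ℂ
local notation "K" => FractionRing (Polynomial ℂ)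

noncomputable abbrev ψ : R →+* K := algebraMap R K

lemma psi_inj : Function.Injective (ψ) := IsFractionRing.injective R K

lemma smul_K (r : R) (x : Polynomial K) : r • x = C (ψ r) * x := by
  rw [← algebraMap_smul K r x, smul_eq_C_mul]

lemma unit_C_psi {r : R} (hr : r ≠ 0) : IsUnit (C (ψ r) : Polynomial K) :=
  Polynomial.isUnit_C.mpr (isUnit_iff_ne_zero.mpr (fun h => hr (psi_inj (h.trans (map_zero ψ).symm))))

lemma squarefree_map_fraction {q : Polynomial R} (hq : q ≠ 0) (hsf : Squarefree q) :
    Squarefree (q.map (ψ)) := by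
  have hinj : Function.Injective (Polynomial.map (ψ) : Polynomial R → Polynomial K) :=
    Polynomial.map_injective _ psi_inj
  intro x hx
  by_contra hxu
  -- pass to the primitive part
  have hc0 : q.content ≠ 0 := fun h => hq (content_eq_zero_iff.mp h)
  have hassoc : Associated (q.primPart.map (ψ)) (q.map (ψ)) := by
    refine ⟨(unit_C_psi hc0).unit, ?_⟩
    rw [IsUnit.unit_spec]
    conv_rhs => rw [q.eq_C_content_mul_primPart]
    rw [Polynomial.map_mul, map_C]
    ring
  have hx' : x * x ∣ q.primPart.map (ψ) := hassoc.dvd_iff_dvd_right.mpr hx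
  have hpp0 : q.primPart.map (ψ) ≠ 0 := fun h => q.primPart_ne_zero (hinj (by simpa using h))
  have hx0 : x ≠ 0 := by rintro rfl; simp at hx'; exact hpp0 hx'
  -- clear denominators of x
  obtain ⟨b, hb⟩ := IsLocalization.integerNormalization_map_to_map (nonZeroDivisors R) x
  set s : Polynomial R := IsLocalization.integerNormalization (nonZeroDivisors R) x with hs
  have hb0 : (b : R) ≠ 0 := nonZeroDivisors.coe_ne_zero b
  have hbx : s.map (ψ) = C (ψ (b : R)) * x := hb.trans (smul_K _ _)
  have hs0 : s ≠ 0 := by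
    intro h
    rw [h, Polynomial.map_zero] at hbx
    exact hx0 (((unit_C_psi hb0).mul_right_eq_zero).mp hbx.symm)
  have hcs0 : s.content ≠ 0 := fun h => hs0 (content_eq_zero_iff.mp h)
  set t : Polynomial R := s.primPart with hts
  have ht : t.map (ψ) * C (ψ s.content) = C (ψ (b : R)) * x := by
    rw [← hbx]
    conv_rhs => rw [s.eq_C_content_mul_primPart]
    rw [Polynomial.map_mul, map_C]
    ring
  have hax : Associated (t.map (ψ)) x := by
    refine ⟨(unit_C_psi hcs0).unit * ((unit_C_psi hb0).unit)⁻¹, ?_⟩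
    have hinv : (C (ψ (b : R)) : Polynomial K) * ↑((unit_C_psi hb0).unit)⁻¹ = 1 :=
      (unit_C_psi hb0).mul_val_inv
    rw [Units.val_mul, ← mul_assoc, IsUnit.unit_spec, ht, mul_comm (C (ψ (b : R))) x, mul_assoc,
      hinv, mul_one]
  have h2 : Associated ((t * t).map (ψ)) (x * x) := by
    rw [Polynomial.map_mul]; exact hax.mul_mul hax
  have hdvdK : (t * t).map (ψ) ∣ q.primPart.map (ψ) := dvd_trans h2.dvd hx'
  have hprim : (t * t).IsPrimitive := s.isPrimitive_primPart.mul s.isPrimitive_primPart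
  have hdvd : t * t ∣ q.primPart :=
    (hprim.dvd_iff_fraction_map_dvd_fraction_map (FractionRing R)).mpr hdvdK
  have htu : IsUnit t := hsf t (hdvd.trans q.primPart_dvd)
  exact hxu (hax.isUnit_iff.mp (htu.map (Polynomial.mapRingHom (ψ))))

lemma coprime_deriv {q : Polynomial R} (hq : q ≠ 0) (hsf : Squarefree q) :
    IsCoprime (q.map (ψ)) ((derivative q).map (ψ)) := by
  haveI : CharZero K := charZero_of_injective_algebraMap psi_inj
  have hsep : (q.map (ψ)).Separable :=
    PerfectField.separable_iff_squarefree.mpr (squarefree_map_fraction hq hsf)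
  have : IsCoprime (q.map (ψ)) (derivative (q.map (ψ))) := hsep
  rwa [derivative_map] at this


/-- for a (reduced) nonzero polynomial `p` of degree `m` in `z` and
degree `n` in `w`, the set of branched values
`C(p) = {w : ∃ z, p(z,w) = 0 ∧ e_p(z,w) ≥ 2}` is finite with at most `2(m-1)n`
elements, and the set of branched points
`B(p) = {z : ∃ w, p(z,w) = 0 ∧ e_p(z,w) ≥ 2}` is finite with at most `2m(m-1)n`
elements.  The branch index `e_p(z,w)` is the root multiplicity of `z` in the
specialization of `p` at `w`. -/
theorem stmt_3 (p : Polynomial (Polynomial ℂ)) (hp : p ≠ 0) (hred : Squarefree p)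
    (m n : ℕ) (hm : p.natDegree = m)
    (hn : ∀ z : ℂ, (p.eval (Polynomial.C z)).natDegree ≤ n) :
    {w : ℂ | ∃ z : ℂ, (spec p w).eval z = 0 ∧
        2 ≤ Polynomial.rootMultiplicity z (spec p w)}.Finite ∧
    Nat.card {w : ℂ | ∃ z : ℂ, (spec p w).eval z = 0 ∧
        2 ≤ Polynomial.rootMultiplicity z (spec p w)} ≤ 2 * (m - 1) * n ∧
    {z : ℂ | ∃ w : ℂ, (spec p w).eval z = 0 ∧
        2 ≤ Polynomial.rootMultiplicity z (spec p w)}.Finite ∧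
    Nat.card {z : ℂ | ∃ w : ℂ, (spec p w).eval z = 0 ∧
        2 ≤ Polynomial.rootMultiplicity z (spec p w)} ≤ 2 * m * (m - 1) * n := by
    classical
  subst hm
  have hmult : ∀ w z : ℂ, (spec p w).eval z = 0 → 2 ≤ rootMultiplicity z (spec p w) →
      spec p w ≠ 0 ∧ (X - C z) ^ 2 ∣ spec p w := by
    intro w z h1 h2
    have hne : spec p w ≠ 0 := by
      intro h
      rw [h, rootMultiplicity_zero] at h2; omega
    exact ⟨hne, (pow_dvd_pow _ h2).trans (pow_rootMultiplicity_dvd _ _)⟩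
  by_cases hm2 : p.natDegree < 2
  · -- degenerate case : both sets are empty
    have hnot : ∀ w z : ℂ, ¬ ((spec p w).eval z = 0 ∧ 2 ≤ rootMultiplicity z (spec p w)) := by
      rintro w z ⟨h1, h2⟩
      obtain ⟨hne, hdvd⟩ := hmult w z h1 h2
      have hle := natDegree_le_of_dvd hdvd hne
      rw [natDegree_pow, natDegree_X_sub_C, mul_one] at hle
      have hle2 : (spec p w).natDegree ≤ p.natDegree := natDegree_map_le
      omega
    have hC : {w : ℂ | ∃ z : ℂ, (spec p w).eval z = 0 ∧
        2 ≤ Polynomial.rootMultiplicity z (spec p w)} = ∅ := by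
      ext w; simp only [Set.mem_setOf_eq, Set.mem_empty_iff_false, iff_false, not_exists]
      exact fun z => hnot w z
    have hB : {z : ℂ | ∃ w : ℂ, (spec p w).eval z = 0 ∧
        2 ≤ Polynomial.rootMultiplicity z (spec p w)} = ∅ := by
      ext z; simp only [Set.mem_setOf_eq, Set.mem_empty_iff_false, iff_false, not_exists]
      exact fun w => hnot w z
    rw [hC, hB]
    simp
  · push_neg at hm2
    set k := p.natDegree - 1 with hk
    have hk1 : 0 < k := by omega
    have hcoe : ∀ i, (p.coeff i).natDegree ≤ n := coeff_coeff_le hn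
    have hcf : ∀ i, ((derivative p).coeff i).natDegree ≤ n := by
      intro i
      rw [coeff_derivative]
      have hcast : ((i : Polynomial ℂ) + 1) = ((i + 1 : ℕ) : Polynomial ℂ) := by push_cast; ring
      calc (p.coeff (i + 1) * ((i : Polynomial ℂ) + 1)).natDegree
          ≤ (p.coeff (i + 1)).natDegree + ((i : Polynomial ℂ) + 1).natDegree := natDegree_mul_le
        _ ≤ n + 0 := by
            rw [hcast, natDegree_natCast]
            exact add_le_add (hcoe _) le_rfl
        _ = n := rfl
    have hcg : ∀ i, ((C ((p.natDegree : Polynomial ℂ)) * p - X * derivative p).coeff i).natDegree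
        ≤ n := by
      intro i
      rw [coeff_sub, coeff_C_mul]
      refine (natDegree_sub_le _ _).trans (max_le ?_ ?_)
      · exact natDegree_mul_le.trans (by simp [natDegree_natCast, hcoe i])
      · cases i with
        | zero => simp
        | succ i => rw [coeff_X_mul]; exact hcf i
    have hfdeg : (derivative p).natDegree ≤ k := by rw [hk]; exact natDegree_derivative_le p
    have hgdegle : (C ((p.natDegree : Polynomial ℂ)) * p - X * derivative p).natDegree ≤ k := by
      rw [natDegree_le_iff_coeff_eq_zero]
      intro j hj
      rw [coeff_sub, coeff_C_mul]
      obtain ⟨j', rfl⟩ : ∃ j', j = j' + 1 := ⟨j - 1, by omega⟩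
      rw [coeff_X_mul, coeff_derivative]
      rcases eq_or_lt_of_le (show p.natDegree ≤ j' + 1 by omega) with hj' | hj'
      · have hcast : ((j' : Polynomial ℂ) + 1) = ((p.natDegree : ℕ) : Polynomial ℂ) := by
          rw [hj']; push_cast; ring
        rw [hcast]; ring
      · have h1 : p.coeff (j' + 1) = 0 := coeff_eq_zero_of_natDegree_lt hj'
        rw [h1]; ring
    set d := (syl k (derivative p) (C ((p.natDegree : Polynomial ℂ)) * p - X * derivative p)).det
      with hd
    have hddeg : d.natDegree ≤ 2 * (p.natDegree - 1) * n := by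
      have h := syl_det_natDegree_le k n _ _ hcf hcg
      rw [← hd] at h
      refine h.trans (le_of_eq ?_)
      rw [hk]
      ring
    -- d is nonzero
    have hfK : ((derivative p).map (ψ)).natDegree = k := by
      refine le_antisymm (natDegree_map_le.trans hfdeg) ?_
      apply le_natDegree_of_ne_zero
      rw [coeff_map]
      intro hzero
      have h0 : (derivative p).coeff k = 0 := psi_inj (by rw [hzero, map_zero])
      rw [coeff_derivative] at h0
      have hk1' : k + 1 = p.natDegree := by omega
      have hlc : p.coeff (k + 1) ≠ 0 := by
        rw [hk1']
        exact mt leadingCoeff_eq_zero.mp hp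
      have hcast : ((k : Polynomial ℂ) + 1) = ((k + 1 : ℕ) : Polynomial ℂ) := by push_cast; ring
      have hcne : ((k : Polynomial ℂ) + 1) ≠ 0 := by
        rw [hcast]
        exact Nat.cast_ne_zero.mpr (by omega)
      exact (mul_ne_zero hlc hcne) h0
    have hco : IsCoprime ((derivative p).map (ψ))
        ((C ((p.natDegree : Polynomial ℂ)) * p - X * derivative p).map (ψ)) := by
      obtain ⟨a, b, hab⟩ := coprime_deriv hp hred
      have hm0 : (ψ ((p.natDegree : Polynomial ℂ))) ≠ 0 := by
        intro h
        have : ((p.natDegree : Polynomial ℂ)) = 0 := psi_inj (by rw [h, map_zero])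
        exact (Nat.cast_ne_zero.mpr (by omega)) this
      have hC : C ((ψ ((p.natDegree : Polynomial ℂ)))⁻¹) * C (ψ ((p.natDegree : Polynomial ℂ)))
          = 1 := by
        rw [← C_mul, inv_mul_cancel₀ hm0, C_1]
      refine ⟨b + a * X * C ((ψ ((p.natDegree : Polynomial ℂ)))⁻¹),
        a * C ((ψ ((p.natDegree : Polynomial ℂ)))⁻¹), ?_⟩
      rw [Polynomial.map_sub, Polynomial.map_mul, Polynomial.map_mul, map_C, map_X]
      linear_combination hab + a * (p.map (ψ)) * hC
    have hd0 : d ≠ 0 := by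
      intro h0
      have hKdet : (syl k ((derivative p).map (ψ))
          ((C ((p.natDegree : Polynomial ℂ)) * p - X * derivative p).map (ψ))).det = 0 := by
        have e1 := RingHom.map_det (ψ) (syl k (derivative p)
          (C ((p.natDegree : Polynomial ℂ)) * p - X * derivative p))
        rw [RingHom.mapMatrix_apply, syl_map] at e1
        rw [← e1, ← hd, h0, map_zero]
      exact fact2 hk1 _ _ hfK (natDegree_map_le.trans hgdegle) hco hKdet
    -- the set of branched values is contained in the roots of d
    have hCsub : {w : ℂ | ∃ z : ℂ, (spec p w).eval z = 0 ∧
        2 ≤ Polynomial.rootMultiplicity z (spec p w)} ⊆ ↑(d.roots.toFinset) := by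
      rintro w ⟨z, h1, h2⟩
      obtain ⟨hne, hdvd⟩ := hmult w z h1 h2
      have hfz : ((derivative p).map (evalRingHom w)).eval z = 0 := by
        rw [← derivative_map p (evalRingHom w), ← spec_def]
        obtain ⟨r, hr⟩ := hdvd
        rw [hr]
        simp [derivative_mul, derivative_pow]
      have hgz : (((C ((p.natDegree : Polynomial ℂ)) * p - X * derivative p)).map
          (evalRingHom w)).eval z = 0 := by
        rw [Polynomial.map_sub, Polynomial.map_mul, Polynomial.map_mul, map_X]
        rw [spec_def] at h1
        simp [h1, hfz]
      have hdet0 := fact1 hk1 _ _ (natDegree_map_le.trans hfdeg)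
        (natDegree_map_le.trans hgdegle) z hfz hgz
      have heval : d.eval w = 0 := by
        have hmap := (RingHom.map_det (evalRingHom w)
          (syl k (derivative p) (C ((p.natDegree : Polynomial ℂ)) * p - X * derivative p))).trans
          (congrArg Matrix.det (syl_map (evalRingHom w) k _ _))
        rw [← hd] at hmap
        exact hmap.trans hdet0
      simp only [Finset.coe_sort_coe, Finset.mem_coe, Multiset.mem_toFinset]
      rw [mem_roots hd0]
      exact heval
    have hCfin : {w : ℂ | ∃ z : ℂ, (spec p w).eval z = 0 ∧
        2 ≤ Polynomial.rootMultiplicity z (spec p w)}.Finite :=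
      Set.Finite.subset (d.roots.toFinset).finite_toSet hCsub
    have hCcard : Nat.card {w : ℂ | ∃ z : ℂ, (spec p w).eval z = 0 ∧
        2 ≤ Polynomial.rootMultiplicity z (spec p w)} ≤ 2 * (p.natDegree - 1) * n := by
      calc Nat.card {w : ℂ | ∃ z : ℂ, (spec p w).eval z = 0 ∧
            2 ≤ Polynomial.rootMultiplicity z (spec p w)}
          = Set.ncard {w : ℂ | ∃ z : ℂ, (spec p w).eval z = 0 ∧
            2 ≤ Polynomial.rootMultiplicity z (spec p w)} := Nat.card_coe_set_eq _
        _ ≤ Set.ncard (↑(d.roots.toFinset) : Set ℂ) :=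
            Set.ncard_le_ncard hCsub (d.roots.toFinset).finite_toSet
        _ = (d.roots.toFinset).card := Set.ncard_coe_finset _
        _ ≤ Multiset.card d.roots := Multiset.toFinset_card_le _
        _ ≤ d.natDegree := card_roots' d
        _ ≤ 2 * (p.natDegree - 1) * n := hddeg
    -- branched points
    have hBsub : {z : ℂ | ∃ w : ℂ, (spec p w).eval z = 0 ∧
        2 ≤ Polynomial.rootMultiplicity z (spec p w)} ⊆
        ↑(d.roots.toFinset.biUnion (fun w => (spec p w).roots.toFinset)) := by
      rintro z ⟨w, h1, h2⟩
      have hwC : w ∈ (↑(d.roots.toFinset) : Set ℂ) := hCsub ⟨z, h1, h2⟩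
      obtain ⟨hne, -⟩ := hmult w z h1 h2
      simp only [Finset.coe_biUnion, Set.mem_iUnion, Finset.mem_coe, Multiset.mem_toFinset]
      refine ⟨w, by simpa using hwC, ?_⟩
      rw [mem_roots hne]
      exact h1
    have hBfin : {z : ℂ | ∃ w : ℂ, (spec p w).eval z = 0 ∧
        2 ≤ Polynomial.rootMultiplicity z (spec p w)}.Finite :=
      Set.Finite.subset (Finset.finite_toSet _) hBsub
    have hBig : (d.roots.toFinset.biUnion (fun w => (spec p w).roots.toFinset)).card
        ≤ 2 * p.natDegree * (p.natDegree - 1) * n := by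
      refine (Finset.card_biUnion_le).trans ?_
      have hone : ∀ w ∈ d.roots.toFinset, ((spec p w).roots.toFinset).card ≤ p.natDegree := by
        intro w _
        exact ((Multiset.toFinset_card_le _).trans (card_roots' _)).trans natDegree_map_le
      calc ∑ w ∈ d.roots.toFinset, ((spec p w).roots.toFinset).card
          ≤ d.roots.toFinset.card * p.natDegree := Finset.sum_le_card_nsmul _ _ _ hone
        _ ≤ (2 * (p.natDegree - 1) * n) * p.natDegree := by
            have : d.roots.toFinset.card ≤ 2 * (p.natDegree - 1) * n :=
              ((Multiset.toFinset_card_le _).trans (card_roots' d)).trans hddeg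
            exact Nat.mul_le_mul_right _ this
        _ = 2 * p.natDegree * (p.natDegree - 1) * n := by ring
    have hBcard : Nat.card {z : ℂ | ∃ w : ℂ, (spec p w).eval z = 0 ∧
        2 ≤ Polynomial.rootMultiplicity z (spec p w)} ≤ 2 * p.natDegree * (p.natDegree - 1) * n := by
      calc Nat.card {z : ℂ | ∃ w : ℂ, (spec p w).eval z = 0 ∧
            2 ≤ Polynomial.rootMultiplicity z (spec p w)}
          = Set.ncard {z : ℂ | ∃ w : ℂ, (spec p w).eval z = 0 ∧
            2 ≤ Polynomial.rootMultiplicity z (spec p w)} := Nat.card_coe_set_eq _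
        _ ≤ Set.ncard (↑(d.roots.toFinset.biUnion (fun w => (spec p w).roots.toFinset)) : Set ℂ) :=
            Set.ncard_le_ncard hBsub (Finset.finite_toSet _)
        _ = (d.roots.toFinset.biUnion (fun w => (spec p w).roots.toFinset)).card :=
            Set.ncard_coe_finset _
        _ ≤ 2 * p.natDegree * (p.natDegree - 1) * n := hBig
    exact ⟨hCfin, hCcard, hBfin, hBcard⟩
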